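/- Let H be a real Hilbert space, T : H → H nonexpansive, (β_n), (λ_n) ⊂ (0,1], x₀ ∈ H, and let (x_n) be generated by the (T-KM) iteration. Let N ∈ ℕ∖{0} satisfy N ≥ max{‖x₀ − p‖, ‖p‖} for some p ∈ Fix T, and let D, B, L : ℕ → ℕ be monotone functions satisfying (Q3), (Q4), (Q6). Then for all k ∈ ℕ and all n ≥ ν₁(k) one has ‖x_{n+1} − x_n‖ ≤ 1/(k+1), where ν₁(k) := D(G(3k+2) + ⌈ln(6N(k+1))⌉) + 1 and G(k) := max{B(4N(k+1)−1), L(10N(k+1)−1)}. -/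

import Mathlib

/-- `G(k) := max{B(4N(k+1)−1), L(10N(k+1)−1)}`. -/
def Gfun (N : ℕ) (B L : ℕ → ℕ) (k : ℕ) : ℕ :=
  max (B (4 * N * (k + 1) - 1)) (L (10 * N * (k + 1) - 1))

/-- `ν₁(k) := D(G(3k+2) + ⌈ln(6N(k+1))⌉) + 1`. -/
noncomputable def nu1 (N : ℕ) (D B L : ℕ → ℕ) (k : ℕ) : ℕ :=
  D (Gfun N B L (3 * k + 2) + Nat.ceil (Real.log (6 * (N : ℝ) * (k + 1)))) + 1

set_option maxHeartbeats 1600000 in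
/-- rate of asymptotic regularity `‖x_{n+1} − x_n‖ → 0`
for the T-KM iteration. -/
theorem tkm_asymptotic_regularity_consecutive
    {H : Type*} [NormedAddCommGroup H] [InnerProductSpace ℝ H] [CompleteSpace H]
    (T : H → H) (hT : ∀ a b : H, ‖T a - T b‖ ≤ ‖a - b‖)
    (β lam : ℕ → ℝ)
    (hβ : ∀ n, β n ∈ Set.Ioc (0 : ℝ) 1)
    (hlam : ∀ n, lam n ∈ Set.Ioc (0 : ℝ) 1)
    (x : ℕ → H)
    (hx : ∀ n, x (n + 1) = β n • x n + lam n • (T (β n • x n) - β n • x n))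
    (N : ℕ) (hN : 0 < N)
    (p : H) (hp : T p = p)
    (hNp : max ‖x 0 - p‖ ‖p‖ ≤ (N : ℝ))
    (D B L : ℕ → ℕ)
    (hDmono : Monotone D) (hBmono : Monotone B) (hLmono : Monotone L)
    (hQ3 : ∀ k : ℕ, (k : ℝ) ≤ ∑ i ∈ Finset.Icc 1 (D k), (1 - β i))
    (hQ4 : ∀ k n : ℕ, ∑ i ∈ Finset.Icc (B k + 1) (B k + n), |β i - β (i - 1)| ≤ 1 / (k + 1))
    (hQ6 : ∀ k n : ℕ, ∑ i ∈ Finset.Icc (L k + 1) (L k + n), |lam i - lam (i - 1)| ≤ 1 / (k + 1)) :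
    ∀ k n : ℕ, nu1 N D B L k ≤ n → ‖x (n + 1) - x n‖ ≤ 1 / (k + 1) := by
  have hβ0 : ∀ n, 0 < β n := fun n => (hβ n).1
  have hβ1 : ∀ n, β n ≤ 1 := fun n => (hβ n).2
  have hl0 : ∀ n, 0 < lam n := fun n => (hlam n).1
  have hl1 : ∀ n, lam n ≤ 1 := fun n => (hlam n).2
  have hpN : ‖p‖ ≤ (N : ℝ) := le_trans (le_max_right _ _) hNp
  -- y_n := β n • x n ; step bound
  have hyp : ∀ n, ‖x n - p‖ ≤ N → ‖β n • x n - p‖ ≤ N := by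
    intro n hn
    have hid : β n • x n - p = β n • (x n - p) + (β n - 1) • p := by module
    calc ‖β n • x n - p‖ = ‖β n • (x n - p) + (β n - 1) • p‖ := by rw [hid]
      _ ≤ ‖β n • (x n - p)‖ + ‖(β n - 1) • p‖ := norm_add_le _ _
      _ = β n * ‖x n - p‖ + (1 - β n) * ‖p‖ := by
          rw [norm_smul, norm_smul, Real.norm_eq_abs, Real.norm_eq_abs,
            abs_of_pos (hβ0 n), abs_of_nonpos (by linarith [hβ1 n])]
          ring
      _ ≤ β n * N + (1 - β n) * N := by
          have := hβ0 n; have := hβ1 n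
          gcongr <;> linarith
      _ = N := by ring
  have hxp : ∀ n, ‖x n - p‖ ≤ (N : ℝ) := by
    intro n
    induction n with
    | zero => exact le_trans (le_max_left _ _) hNp
    | succ n ih =>
      have hy := hyp n ih
      have hid : β n • x n + lam n • (T (β n • x n) - β n • x n) - p
          = (1 - lam n) • (β n • x n - p) + lam n • (T (β n • x n) - p) := by module
      have hTy : ‖T (β n • x n) - p‖ ≤ ‖β n • x n - p‖ := by
        have := hT (β n • x n) p; rwa [hp] at this
      calc ‖x (n + 1) - p‖ = ‖(1 - lam n) • (β n • x n - p) + lam n • (T (β n • x n) - p)‖ := by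
            rw [hx n, hid]
        _ ≤ ‖(1 - lam n) • (β n • x n - p)‖ + ‖lam n • (T (β n • x n) - p)‖ := norm_add_le _ _
        _ = (1 - lam n) * ‖β n • x n - p‖ + lam n * ‖T (β n • x n) - p‖ := by
            rw [norm_smul, norm_smul, Real.norm_eq_abs, Real.norm_eq_abs,
              abs_of_nonneg (by linarith [hl1 n]), abs_of_pos (hl0 n)]
        _ ≤ (1 - lam n) * N + lam n * N := by
            have h2 := le_trans hTy hy
            have := hl0 n; have := hl1 n
            gcongr <;> linarith
        _ = N := by ring
  have hyN : ∀ n, ‖β n • x n - p‖ ≤ (N : ℝ) := fun n => hyp n (hxp n)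
  have hxN : ∀ n, ‖x n‖ ≤ 2 * N := by
    intro n
    calc ‖x n‖ = ‖(x n - p) + p‖ := by rw [sub_add_cancel]
    _ ≤ ‖x n - p‖ + ‖p‖ := norm_add_le _ _
    _ ≤ N + N := add_le_add (hxp n) hpN
    _ = 2 * N := by ring
  have hTyy : ∀ n, ‖T (β n • x n) - β n • x n‖ ≤ 2 * N := by
    intro n
    have hTy : ‖T (β n • x n) - p‖ ≤ ‖β n • x n - p‖ := by
      have := hT (β n • x n) p; rwa [hp] at this
    calc ‖T (β n • x n) - β n • x n‖ ≤ ‖T (β n • x n) - p‖ + ‖p - β n • x n‖ :=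
          norm_sub_le_norm_sub_add_norm_sub _ _ _
      _ ≤ N + N := by
          refine add_le_add (le_trans hTy (hyN n)) ?_
          rw [norm_sub_rev]; exact hyN n
      _ = 2 * N := by ring
  -- consecutive step recursion
  have hrec : ∀ n, ‖x (n + 2) - x (n + 1)‖ ≤ β (n + 1) * ‖x (n + 1) - x n‖
      + 2 * N * |β (n + 1) - β n| + 2 * N * |lam (n + 1) - lam n| := by
    intro n
    have hid : x (n + 2) - x (n + 1)
        = (1 - lam (n + 1)) • (β (n + 1) • x (n + 1) - β n • x n)
          + lam (n + 1) • (T (β (n + 1) • x (n + 1)) - T (β n • x n))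
          + (lam (n + 1) - lam n) • (T (β n • x n) - β n • x n) := by
      rw [hx (n + 1), hx n]; module
    have hdy : ‖β (n + 1) • x (n + 1) - β n • x n‖
        ≤ β (n + 1) * ‖x (n + 1) - x n‖ + |β (n + 1) - β n| * (2 * N) := by
      have hid2 : β (n + 1) • x (n + 1) - β n • x n
          = β (n + 1) • (x (n + 1) - x n) + (β (n + 1) - β n) • x n := by module
      calc ‖β (n + 1) • x (n + 1) - β n • x n‖
          = ‖β (n + 1) • (x (n + 1) - x n) + (β (n + 1) - β n) • x n‖ := by rw [hid2]
        _ ≤ ‖β (n + 1) • (x (n + 1) - x n)‖ + ‖(β (n + 1) - β n) • x n‖ := norm_add_le _ _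
        _ = β (n + 1) * ‖x (n + 1) - x n‖ + |β (n + 1) - β n| * ‖x n‖ := by
            rw [norm_smul, norm_smul, Real.norm_eq_abs, Real.norm_eq_abs,
              abs_of_pos (hβ0 _)]
        _ ≤ β (n + 1) * ‖x (n + 1) - x n‖ + |β (n + 1) - β n| * (2 * N) := by
            exact add_le_add le_rfl (mul_le_mul_of_nonneg_left (hxN n) (abs_nonneg _))
    have h1 : ‖(1 - lam (n + 1)) • (β (n + 1) • x (n + 1) - β n • x n)‖
        = (1 - lam (n + 1)) * ‖β (n + 1) • x (n + 1) - β n • x n‖ := by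
      rw [norm_smul, Real.norm_eq_abs, abs_of_nonneg (by linarith [hl1 (n + 1)])]
    have h2 : ‖lam (n + 1) • (T (β (n + 1) • x (n + 1)) - T (β n • x n))‖
        ≤ lam (n + 1) * ‖β (n + 1) • x (n + 1) - β n • x n‖ := by
      rw [norm_smul, Real.norm_eq_abs, abs_of_pos (hl0 (n + 1))]
      exact mul_le_mul_of_nonneg_left (hT _ _) (le_of_lt (hl0 _))
    have h3 : ‖(lam (n + 1) - lam n) • (T (β n • x n) - β n • x n)‖
        ≤ |lam (n + 1) - lam n| * (2 * N) := by
      rw [norm_smul, Real.norm_eq_abs]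
      exact mul_le_mul_of_nonneg_left (hTyy n) (abs_nonneg _)
    have hsplit : ‖x (n + 2) - x (n + 1)‖
        ≤ ‖(1 - lam (n + 1)) • (β (n + 1) • x (n + 1) - β n • x n)‖
          + ‖lam (n + 1) • (T (β (n + 1) • x (n + 1)) - T (β n • x n))‖
          + ‖(lam (n + 1) - lam n) • (T (β n • x n) - β n • x n)‖ := by
      rw [hid]; exact norm_add₃_le
    have hl1' := hl1 (n + 1)
    have hl0' := hl0 (n + 1)
    nlinarith [norm_nonneg (β (n + 1) • x (n + 1) - β n • x n)]
  -- unfolding of the recursion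
  have hunfold : ∀ m j : ℕ, ‖x (m + j + 1) - x (m + j)‖
      ≤ (∏ i ∈ Finset.Icc (m + 1) (m + j), β i) * ‖x (m + 1) - x m‖
        + ∑ i ∈ Finset.Icc (m + 1) (m + j),
            (2 * N * |β i - β (i - 1)| + 2 * N * |lam i - lam (i - 1)|) := by
    intro m j
    induction j with
    | zero => simp
    | succ j ih =>
      have hprod0 : 0 ≤ ∏ i ∈ Finset.Icc (m + 1) (m + j), β i :=
        Finset.prod_nonneg fun i _ => (hβ0 i).le
      have hsum0 : 0 ≤ ∑ i ∈ Finset.Icc (m + 1) (m + j),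
          (2 * N * |β i - β (i - 1)| + 2 * N * |lam i - lam (i - 1)|) :=
        Finset.sum_nonneg fun i _ => by positivity
      have hstep := hrec (m + j)
      have hidx : m + (j + 1) = (m + j) + 1 := rfl
      rw [hidx, Finset.prod_Icc_succ_top (by omega), Finset.sum_Icc_succ_top (by omega),
        Nat.add_sub_cancel]
      have hb0 := hβ0 (m + j + 1)
      have hb1 := hβ1 (m + j + 1)
      have h4 : β (m + j + 1) * ‖x (m + j + 1) - x (m + j)‖
          ≤ β (m + j + 1) * ((∏ i ∈ Finset.Icc (m + 1) (m + j), β i) * ‖x (m + 1) - x m‖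
            + ∑ i ∈ Finset.Icc (m + 1) (m + j),
                (2 * N * |β i - β (i - 1)| + 2 * N * |lam i - lam (i - 1)|)) :=
        mul_le_mul_of_nonneg_left ih hb0.le
      have h5 : (0:ℝ) ≤ (1 - β (m + j + 1)) * ∑ i ∈ Finset.Icc (m + 1) (m + j),
          (2 * N * |β i - β (i - 1)| + 2 * N * |lam i - lam (i - 1)|) :=
        mul_nonneg (by linarith) hsum0
      nlinarith [norm_nonneg (x (m + 1) - x m), mul_nonneg hprod0 (norm_nonneg (x (m + 1) - x m))]
  -- splitting of sums over consecutive intervals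
  have hsplit : ∀ (f : ℕ → ℝ) (g j : ℕ),
      ∑ i ∈ Finset.Icc 1 g, f i + ∑ i ∈ Finset.Icc (g + 1) (g + j), f i
        = ∑ i ∈ Finset.Icc 1 (g + j), f i := by
    intro f g j
    rw [← Finset.Ico_add_one_right_eq_Icc 1 g, ← Finset.Ico_add_one_right_eq_Icc (g + 1) (g + j),
      ← Finset.Ico_add_one_right_eq_Icc 1 (g + j)]
    exact Finset.sum_Ico_consecutive f (by omega) (by omega)
  -- main argument
  intro k n hn
  rw [nu1] at hn
  set g := Gfun N B L (3 * k + 2) with hgdef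
  set c := Nat.ceil (Real.log (6 * (N : ℝ) * (k + 1))) with hcdef
  have hone : ∀ i : ℕ, (0:ℝ) ≤ 1 - β i := fun i => by linarith [hβ1 i]
  have hcard : ∀ M : ℕ, ∑ i ∈ Finset.Icc 1 M, (1 - β i) ≤ (M : ℝ) := by
    intro M
    calc ∑ i ∈ Finset.Icc 1 M, (1 - β i) ≤ ∑ i ∈ Finset.Icc 1 M, 1 :=
          Finset.sum_le_sum fun i _ => by linarith [hβ0 i]
      _ = (M : ℝ) := by simp
  have hMge : g + c ≤ D (g + c) := by
    have h1 := hQ3 (g + c)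
    have h2 := hcard (D (g + c))
    exact_mod_cast le_trans h1 h2
  have hgn : g ≤ n := by omega
  obtain ⟨j, rfl⟩ := Nat.exists_eq_add_of_le hgn
  have hmain := hunfold g j
  -- sum of (1 - β i) over the tail is at least c
  have hkey : (c : ℝ) ≤ ∑ i ∈ Finset.Icc (g + 1) (g + j), (1 - β i) := by
    have h1 : ((g : ℝ) + c) ≤ ∑ i ∈ Finset.Icc 1 (g + j), (1 - β i) := by
      refine le_trans (by exact_mod_cast hQ3 (g + c)) ?_
      exact Finset.sum_le_sum_of_subset_of_nonneg
        (Finset.Icc_subset_Icc_right (by omega)) (fun i _ _ => hone i)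
    have h2 := hcard g
    have h3 := hsplit (fun i => 1 - β i) g j
    linarith
  have hK : (0:ℝ) < (k : ℝ) + 1 := by positivity
  have hN1 : (1:ℝ) ≤ (N : ℝ) := by exact_mod_cast hN
  have h6pos : (0:ℝ) < 6 * (N:ℝ) * ((k:ℝ) + 1) := by positivity
  -- product bound
  have hprodle : (∏ i ∈ Finset.Icc (g + 1) (g + j), β i) ≤ 1 / (6 * (N:ℝ) * ((k:ℝ) + 1)) := by
    have hexp : (∏ i ∈ Finset.Icc (g + 1) (g + j), β i)
        ≤ Real.exp (-∑ i ∈ Finset.Icc (g + 1) (g + j), (1 - β i)) := by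
      calc (∏ i ∈ Finset.Icc (g + 1) (g + j), β i)
          ≤ ∏ i ∈ Finset.Icc (g + 1) (g + j), Real.exp (-(1 - β i)) :=
            Finset.prod_le_prod (fun i _ => (hβ0 i).le)
              (fun i _ => by have := Real.add_one_le_exp (-(1 - β i)); linarith)
        _ = Real.exp (∑ i ∈ Finset.Icc (g + 1) (g + j), -(1 - β i)) :=
            (Real.exp_sum _ _).symm
        _ = Real.exp (-∑ i ∈ Finset.Icc (g + 1) (g + j), (1 - β i)) := by
            rw [Finset.sum_neg_distrib]
    have hcge : Real.log (6 * (N:ℝ) * ((k:ℝ) + 1)) ≤ (c : ℝ) := by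
      have := Nat.le_ceil (Real.log (6 * (N : ℝ) * (k + 1)))
      rw [hcdef]; push_cast at this ⊢; convert this using 3 <;> norm_num
    calc (∏ i ∈ Finset.Icc (g + 1) (g + j), β i)
        ≤ Real.exp (-∑ i ∈ Finset.Icc (g + 1) (g + j), (1 - β i)) := hexp
      _ ≤ Real.exp (-(Real.log (6 * (N:ℝ) * ((k:ℝ) + 1)))) := by
          apply Real.exp_le_exp.mpr; linarith
      _ = 1 / (6 * (N:ℝ) * ((k:ℝ) + 1)) := by
          rw [Real.exp_neg, Real.exp_log h6pos, one_div]
  -- β-variation bound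
  have hsub1 : ∀ X : ℕ, 0 < X → (X - 1) + 1 = X := fun X hX => Nat.succ_pred_eq_of_pos hX
  have hBsum : ∑ i ∈ Finset.Icc (g + 1) (g + j), |β i - β (i - 1)|
      ≤ 1 / (12 * (N:ℝ) * ((k:ℝ) + 1)) := by
    set jB := 4 * N * (3 * k + 2 + 1) - 1 with hjB
    have hgB : B jB ≤ g := by rw [hgdef]; exact le_max_left _ _
    have hss : Finset.Icc (g + 1) (g + j) ⊆ Finset.Icc (B jB + 1) (B jB + (g + j)) :=
      Finset.Icc_subset_Icc (by omega) (by omega)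
    have h1 : ∑ i ∈ Finset.Icc (g + 1) (g + j), |β i - β (i - 1)|
        ≤ ∑ i ∈ Finset.Icc (B jB + 1) (B jB + (g + j)), |β i - β (i - 1)| :=
      Finset.sum_le_sum_of_subset_of_nonneg hss (fun i _ _ => abs_nonneg _)
    have h2 := hQ4 jB (g + j)
    have hpos : 0 < 4 * N * (3 * k + 2 + 1) := by positivity
    have hcast : ((jB:ℝ) + 1) = 12 * (N:ℝ) * ((k:ℝ) + 1) := by
      have h3 : jB + 1 = 4 * N * (3 * k + 2 + 1) := by rw [hjB]; exact hsub1 _ hpos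
      have h4 : ((jB + 1 : ℕ) : ℝ) = ((4 * N * (3 * k + 2 + 1) : ℕ) : ℝ) := by rw [h3]
      push_cast at h4; linarith [h4]
    rw [hcast] at h2
    linarith
  -- lam-variation bound
  have hLsum : ∑ i ∈ Finset.Icc (g + 1) (g + j), |lam i - lam (i - 1)|
      ≤ 1 / (30 * (N:ℝ) * ((k:ℝ) + 1)) := by
    set jL := 10 * N * (3 * k + 2 + 1) - 1 with hjL
    have hgL : L jL ≤ g := by rw [hgdef]; exact le_max_right _ _
    have hss : Finset.Icc (g + 1) (g + j) ⊆ Finset.Icc (L jL + 1) (L jL + (g + j)) :=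
      Finset.Icc_subset_Icc (by omega) (by omega)
    have h1 : ∑ i ∈ Finset.Icc (g + 1) (g + j), |lam i - lam (i - 1)|
        ≤ ∑ i ∈ Finset.Icc (L jL + 1) (L jL + (g + j)), |lam i - lam (i - 1)| :=
      Finset.sum_le_sum_of_subset_of_nonneg hss (fun i _ _ => abs_nonneg _)
    have h2 := hQ6 jL (g + j)
    have hpos : 0 < 10 * N * (3 * k + 2 + 1) := by positivity
    have hcast : ((jL:ℝ) + 1) = 30 * (N:ℝ) * ((k:ℝ) + 1) := by
      have h3 : jL + 1 = 10 * N * (3 * k + 2 + 1) := by rw [hjL]; exact hsub1 _ hpos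
      have h4 : ((jL + 1 : ℕ) : ℝ) = ((10 * N * (3 * k + 2 + 1) : ℕ) : ℝ) := by rw [h3]
      push_cast at h4; linarith [h4]
    rw [hcast] at h2
    linarith
  -- the error sum
  have hesum : ∑ i ∈ Finset.Icc (g + 1) (g + j),
      (2 * N * |β i - β (i - 1)| + 2 * N * |lam i - lam (i - 1)|)
      = 2 * N * ∑ i ∈ Finset.Icc (g + 1) (g + j), |β i - β (i - 1)|
        + 2 * N * ∑ i ∈ Finset.Icc (g + 1) (g + j), |lam i - lam (i - 1)| := by
    rw [Finset.sum_add_distrib, Finset.mul_sum, Finset.mul_sum]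
  have hag : ‖x (g + 1) - x g‖ ≤ 2 * N := by
    calc ‖x (g + 1) - x g‖ ≤ ‖x (g + 1) - p‖ + ‖p - x g‖ :=
          norm_sub_le_norm_sub_add_norm_sub _ _ _
      _ ≤ N + N := by
          refine add_le_add (hxp _) ?_
          rw [norm_sub_rev]; exact hxp g
      _ = 2 * N := by ring
  have hP0 : 0 ≤ ∏ i ∈ Finset.Icc (g + 1) (g + j), β i :=
    Finset.prod_nonneg fun i _ => (hβ0 i).le
  have hterm1 : (∏ i ∈ Finset.Icc (g + 1) (g + j), β i) * ‖x (g + 1) - x g‖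
      ≤ (1 / (6 * (N:ℝ) * ((k:ℝ) + 1))) * (2 * N) :=
    mul_le_mul hprodle hag (norm_nonneg _) (by positivity)
  have harith : (1 / (6 * (N:ℝ) * ((k:ℝ) + 1))) * (2 * N)
      + 2 * N * (1 / (12 * (N:ℝ) * ((k:ℝ) + 1)))
      + 2 * N * (1 / (30 * (N:ℝ) * ((k:ℝ) + 1))) ≤ 1 / ((k:ℝ) + 1) := by
    have hNpos : (0:ℝ) < N := by linarith
    have hK0 : ((k:ℝ) + 1) ≠ 0 := ne_of_gt hK
    have hN0 : (N:ℝ) ≠ 0 := ne_of_gt hNpos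
    have e1 : (1 / (6 * (N:ℝ) * ((k:ℝ) + 1))) * (2 * N) = 1 / (3 * ((k:ℝ) + 1)) := by
      field_simp; ring
    have e2 : 2 * (N:ℝ) * (1 / (12 * (N:ℝ) * ((k:ℝ) + 1))) = 1 / (6 * ((k:ℝ) + 1)) := by
      field_simp; ring
    have e3 : 2 * (N:ℝ) * (1 / (30 * (N:ℝ) * ((k:ℝ) + 1))) = 1 / (15 * ((k:ℝ) + 1)) := by
      field_simp; ring
    rw [e1, e2, e3]
    have f1 : 1 / (3:ℝ) * (1 / ((k:ℝ) + 1)) = 1 / (3 * ((k:ℝ) + 1)) := one_div_mul_one_div _ _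
    have f2 : 1 / (6:ℝ) * (1 / ((k:ℝ) + 1)) = 1 / (6 * ((k:ℝ) + 1)) := one_div_mul_one_div _ _
    have f3 : 1 / (15:ℝ) * (1 / ((k:ℝ) + 1)) = 1 / (15 * ((k:ℝ) + 1)) := one_div_mul_one_div _ _
    have h5 : (0:ℝ) ≤ 1 / ((k:ℝ) + 1) := by positivity
    linarith
  calc ‖x (g + j + 1) - x (g + j)‖
      ≤ (∏ i ∈ Finset.Icc (g + 1) (g + j), β i) * ‖x (g + 1) - x g‖
        + ∑ i ∈ Finset.Icc (g + 1) (g + j),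
            (2 * N * |β i - β (i - 1)| + 2 * N * |lam i - lam (i - 1)|) := hmain
    _ ≤ (1 / (6 * (N:ℝ) * ((k:ℝ) + 1))) * (2 * N)
        + (2 * N * (1 / (12 * (N:ℝ) * ((k:ℝ) + 1)))
          + 2 * N * (1 / (30 * (N:ℝ) * ((k:ℝ) + 1)))) := by
        rw [hesum]
        refine add_le_add hterm1 (add_le_add ?_ ?_)
        · exact mul_le_mul_of_nonneg_left hBsum (by positivity)
        · exact mul_le_mul_of_nonneg_left hLsum (by positivity)
    _ ≤ 1 / ((k:ℝ) + 1) := by linarith [harith]
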